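/- With f and h as in the Mercer-type setup, if X is a random variable with distribution π, then the Bochner expectation of the random Hilbert–Schmidt operator f(X) ⊗ f(X) equals the integral operator H with kernel h, i.e., E[f(X) ⊗ f(X)] = H where H u = ∑_{n∈I} λ_n ⟨φ_n, u⟩ φ_n. -/

import Mathlib

set_option maxHeartbeats 1000000
open MeasureTheory Filter

lemma aesm_tsum_of_summable {α : Type*} {m : MeasurableSpace α} {μ : Measure α}
    {ι : Type*} [Countable ι] {f : ι → α → ℝ}
    (hf : ∀ n, AEStronglyMeasurable (f n) μ) (hs : ∀ x, Summable fun n => f n x) :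
    AEStronglyMeasurable (fun x => ∑' n, f n x) μ :=
  aestronglyMeasurable_of_tendsto_ae (atTop : Filter (Finset ι))
    (fun s => Finset.aestronglyMeasurable_sum s (fun n _ => hf n))
    (Filter.Eventually.of_forall fun x => by simp only [Finset.sum_apply]; exact (hs x).hasSum)

/-- Dominated-convergence packaging: the integral of a product of two pointwise
sums is the sum over pairs of integrals of products. -/
lemma hasSum_integral_mul_of_bounds {α : Type*} {m : MeasurableSpace α} {μ : Measure α}
    [IsProbabilityMeasure μ]
    {ι κ : Type*} [Countable ι] [Countable κ]
    {a : ι → α → ℝ} {b : κ → α → ℝ} {A B : α → ℝ} {Ca Cb : ℝ}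
    (hameas : ∀ n, AEStronglyMeasurable (a n) μ)
    (hbmeas : ∀ n, AEStronglyMeasurable (b n) μ)
    (ha : ∀ x, HasSum (fun n => a n x) (A x))
    (hb : ∀ x, HasSum (fun n => b n x) (B x))
    (haS : ∀ x, Summable fun n => |a n x|)
    (hbS : ∀ x, Summable fun n => |b n x|)
    (haC : ∀ x, ∑' n, |a n x| ≤ Ca)
    (hbC : ∀ x, ∑' n, |b n x| ≤ Cb) :
    HasSum (fun p : ι × κ => ∫ x, a p.1 x * b p.2 x ∂μ) (∫ x, A x * B x ∂μ) := by
  have habsmeas : ∀ n : ι, AEStronglyMeasurable (fun x => |a n x|) μ := fun n =>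
    (hameas n).norm.congr (Filter.Eventually.of_forall fun x => Real.norm_eq_abs (a n x))
  have hbbsmeas : ∀ n : κ, AEStronglyMeasurable (fun x => |b n x|) μ := fun n =>
    (hbmeas n).norm.congr (Filter.Eventually.of_forall fun x => Real.norm_eq_abs (b n x))
  have hbdd_sum : ∀ x, Summable (fun p : ι × κ => |a p.1 x| * |b p.2 x|) := fun x =>
    (haS x).mul_of_nonneg (hbS x) (fun n => abs_nonneg _) (fun n => abs_nonneg _)
  refine hasSum_integral_of_dominated_convergence
    (fun p x => |a p.1 x| * |b p.2 x|) ?_ ?_ ?_ ?_ ?_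
  · exact fun p => (hameas p.1).mul (hbmeas p.2)
  · intro p
    refine Filter.Eventually.of_forall fun x => ?_
    rw [Real.norm_eq_abs, abs_mul]
  · exact Filter.Eventually.of_forall hbdd_sum
  · have heq : (fun x => ∑' p : ι × κ, |a p.1 x| * |b p.2 x|)
        = fun x => (∑' n, |a n x|) * (∑' n, |b n x|) := by
      funext x
      rw [← Summable.tsum_mul_tsum (haS x) (hbS x) (hbdd_sum x)]
    rw [heq]
    refine (integrable_const (Ca * Cb)).mono'
      ((aesm_tsum_of_summable habsmeas haS).mul (aesm_tsum_of_summable hbbsmeas hbS)) ?_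
    refine Filter.Eventually.of_forall fun x => ?_
    have h1 : 0 ≤ ∑' n, |a n x| := tsum_nonneg fun n => abs_nonneg _
    have h2 : 0 ≤ ∑' n, |b n x| := tsum_nonneg fun n => abs_nonneg _
    rw [Real.norm_eq_abs, abs_of_nonneg (mul_nonneg h1 h2)]
    exact mul_le_mul (haC x) (hbC x) h2 (le_trans h1 (haC x))
  · refine Filter.Eventually.of_forall fun x => ?_
    refine (ha x).mul (hb x) ?_
    refine Summable.of_abs ?_
    refine (hbdd_sum x).congr fun p => ?_
    rw [abs_mul]

theorem expectation_rank_one_eq_kernel_operator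
    {𝒳 : Type*} [MeasurableSpace 𝒳] (π : Measure 𝒳) [IsProbabilityMeasure π]
    (I : Set ℕ) (φ : I → 𝒳 → ℝ) (lam : I → ℝ) (hlam : ∀ n, 0 ≤ lam n)
    (hlam2 : Summable (fun n : I => lam n ^ 2))
    (hmem : ∀ n : I, MemLp (φ n) 2 π)
    (horth : Orthonormal ℝ (fun n : I => (hmem n).toLp (φ n)))
    (h : 𝒳 → 𝒳 → ℝ)
    (habs : ∀ x y, Summable (fun n : I => |lam n * φ n x * φ n y|))
    (hker : ∀ x y, HasSum (fun n : I => lam n * φ n x * φ n y) (h x y))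
    (hbdd : ∃ M : ℝ, ∀ x, h x x ≤ M)
    (f : 𝒳 → Lp ℝ 2 π)
    (hf : ∀ x, HasSum
      (fun n : I => (Real.sqrt (lam n) * φ n x) • (hmem n).toLp (φ n)) (f x))
    (H : Lp ℝ 2 π →L[ℝ] Lp ℝ 2 π)
    (hH : ∀ u : Lp ℝ 2 π, HasSum
      (fun n : I =>
        (lam n * (inner ℝ ((hmem n).toLp (φ n)) u : ℝ)) • (hmem n).toLp (φ n))
      (H u))
    {Ω : Type*} [MeasurableSpace Ω] (ℙ : Measure Ω) [IsProbabilityMeasure ℙ]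
    (X : Ω → 𝒳) (hX : Measurable X) (hlaw : Measure.map X ℙ = π) :
    ∫ ω, (innerSL ℝ (f (X ω))).smulRight (f (X ω)) ∂ℙ = H := by
  classical
  obtain ⟨M, hM⟩ := hbdd
  -- orthonormality in explicit form
  have horthite : ∀ n m : I,
      (inner ℝ ((hmem n).toLp (φ n)) ((hmem m).toLp (φ m)) : ℝ) = if n = m then 1 else 0 :=
    orthonormal_iff_ite.mp horth
  have hφint : ∀ n m : I, ∫ x, φ n x * φ m x ∂π = if n = m then 1 else 0 := by
    intro n m
    rw [← horthite n m, L2.inner_def]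
    apply integral_congr_ae
    filter_upwards [(hmem n).coeFn_toLp, (hmem m).coeFn_toLp] with x h1 h2
    simp [h1, h2, RCLike.inner_apply, conj_trivial, mul_comm]
  -- diagonal sums
  have hsq : ∀ x, HasSum (fun n : I => lam n * φ n x ^ 2) (h x x) := by
    intro x
    exact HasSum.congr_fun (hker x x) fun n => by ring
  -- inner products of f x with fixed vectors
  have hinner_fu : ∀ (u : Lp ℝ 2 π) (x : 𝒳),
      HasSum (fun n : I => Real.sqrt (lam n) * φ n x * (inner ℝ ((hmem n).toLp (φ n)) u : ℝ))
        (inner ℝ (f x) u : ℝ) := by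
    intro u x
    have h1 := (hf x).mapL (innerSL ℝ u)
    simp only [innerSL_apply_apply, real_inner_smul_right] at h1
    rw [real_inner_comm]
    exact h1.congr_fun fun n => by rw [real_inner_comm ((hmem n).toLp (φ n)) u]
  -- norm of f x
  have hnormf : ∀ x, ‖f x‖ ^ 2 = h x x := by
    intro x
    have h2 : ∀ n : I, (inner ℝ ((hmem n).toLp (φ n)) (f x) : ℝ)
        = Real.sqrt (lam n) * φ n x := by
      intro n
      have h3 := (hf x).mapL (innerSL ℝ ((hmem n).toLp (φ n)))
      simp only [innerSL_apply_apply, real_inner_smul_right] at h3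
      have h4 : HasSum
          (fun m : I => (if m = n then Real.sqrt (lam n) * φ n x else 0))
          (inner ℝ ((hmem n).toLp (φ n)) (f x) : ℝ) := by
        refine h3.congr_fun fun m => ?_
        rw [horthite n m]
        by_cases hmn : m = n
        · subst hmn; simp
        · simp [hmn, Ne.symm hmn]
      exact ((hasSum_ite_eq n _).unique h4).symm
    have h5 : HasSum (fun n : I => lam n * φ n x ^ 2) (inner ℝ (f x) (f x) : ℝ) := by
      refine (hinner_fu (f x) x).congr_fun fun n => ?_
      rw [h2 n]
      have hs2 : Real.sqrt (lam n) * Real.sqrt (lam n) = lam n :=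
        Real.mul_self_sqrt (hlam n)
      linear_combination (-(φ n x ^ 2)) * hs2
    have h6 := (hsq x).unique h5
    rw [h6, real_inner_self_eq_norm_sq]
  have hMnn : ∀ x, ‖f x‖ ≤ Real.sqrt (max M 0) := by
    intro x
    have h1 : ‖f x‖ ^ 2 ≤ max M 0 := by
      rw [hnormf x]; exact le_max_of_le_left (hM x)
    calc ‖f x‖ = Real.sqrt (‖f x‖ ^ 2) := by rw [Real.sqrt_sq (norm_nonneg _)]
      _ ≤ Real.sqrt (max M 0) := Real.sqrt_le_sqrt h1
  -- measurability of f
  have haesm_f : AEStronglyMeasurable f π :=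
    aestronglyMeasurable_of_tendsto_ae (atTop : Filter (Finset I))
      (fun s => Finset.aestronglyMeasurable_sum s
        (fun n _ => (((hmem n).aestronglyMeasurable.const_mul
          (Real.sqrt (lam n)))).smul_const ((hmem n).toLp (φ n))))
      (Filter.Eventually.of_forall fun x => by simp only [Finset.sum_apply]; exact hf x)
  have hg_aesm : ∀ u : Lp ℝ 2 π,
      AEStronglyMeasurable (fun x => (inner ℝ (f x) u : ℝ) • f x) π := fun u =>
    (haesm_f.inner aestronglyMeasurable_const :
      AEStronglyMeasurable (fun x => (inner ℝ (f x) u : ℝ)) π).smul haesm_f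
  -- summability/bounds package for the coefficients of a fixed vector
  have pack : ∀ w : Lp ℝ 2 π,
      (∀ x, Summable (fun n : I =>
        |Real.sqrt (lam n) * φ n x * (inner ℝ ((hmem n).toLp (φ n)) w : ℝ)|)) ∧
      (∀ x, (∑' n : I,
        |Real.sqrt (lam n) * φ n x * (inner ℝ ((hmem n).toLp (φ n)) w : ℝ)|)
          ≤ (max M 0 + ‖w‖ ^ 2) / 2) := by
    intro w
    have hW2 : Summable (fun n : I => (inner ℝ ((hmem n).toLp (φ n)) w : ℝ) ^ 2) := by
      have := horth.inner_products_summable w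
      simpa [Real.norm_eq_abs, sq_abs] using this
    have hWb : (∑' n : I, (inner ℝ ((hmem n).toLp (φ n)) w : ℝ) ^ 2) ≤ ‖w‖ ^ 2 := by
      have := horth.tsum_inner_products_le w
      simpa [Real.norm_eq_abs, sq_abs] using this
    have hle : ∀ (n : I) (x : 𝒳),
        |Real.sqrt (lam n) * φ n x * (inner ℝ ((hmem n).toLp (φ n)) w : ℝ)|
          ≤ (lam n * φ n x ^ 2 + (inner ℝ ((hmem n).toLp (φ n)) w : ℝ) ^ 2) / 2 := by
      intro n x
      have h1 := Real.sq_sqrt (hlam n)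
      have h2 : |Real.sqrt (lam n) * φ n x * (inner ℝ ((hmem n).toLp (φ n)) w : ℝ)|
          = Real.sqrt (lam n) * |φ n x| * |(inner ℝ ((hmem n).toLp (φ n)) w : ℝ)| := by
        rw [abs_mul, abs_mul, abs_of_nonneg (Real.sqrt_nonneg _)]
      rw [h2]
      nlinarith [sq_nonneg (Real.sqrt (lam n) * |φ n x|
          - |(inner ℝ ((hmem n).toLp (φ n)) w : ℝ)|),
        Real.sqrt_nonneg (lam n), abs_nonneg (φ n x),
        abs_nonneg ((inner ℝ ((hmem n).toLp (φ n)) w : ℝ)),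
        sq_abs (φ n x), sq_abs ((inner ℝ ((hmem n).toLp (φ n)) w : ℝ))]
    have hSsum : ∀ x, Summable (fun n : I =>
        (lam n * φ n x ^ 2 + (inner ℝ ((hmem n).toLp (φ n)) w : ℝ) ^ 2) / 2) := fun x =>
      ((hsq x).summable.add hW2).div_const 2
    constructor
    · intro x
      exact Summable.of_nonneg_of_le (fun n => abs_nonneg _) (fun n => hle n x) (hSsum x)
    · intro x
      calc (∑' n : I, |Real.sqrt (lam n) * φ n x * (inner ℝ ((hmem n).toLp (φ n)) w : ℝ)|)
          ≤ ∑' n : I, (lam n * φ n x ^ 2 + (inner ℝ ((hmem n).toLp (φ n)) w : ℝ) ^ 2) / 2 :=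
            Summable.tsum_le_tsum (fun n => hle n x)
              (Summable.of_nonneg_of_le (fun n => abs_nonneg _) (fun n => hle n x) (hSsum x))
              (hSsum x)
        _ = (h x x + ∑' n : I, (inner ℝ ((hmem n).toLp (φ n)) w : ℝ) ^ 2) / 2 := by
            rw [tsum_div_const, Summable.tsum_add (hsq x).summable hW2, (hsq x).tsum_eq]
        _ ≤ (max M 0 + ‖w‖ ^ 2) / 2 := by
            have h1 : h x x ≤ max M 0 := le_max_of_le_left (hM x)
            linarith [hWb]
  -- KEY: for every u, the Bochner integral of ⟪f x, u⟫ • f x is H u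
  have hkey : ∀ u : Lp ℝ 2 π, ∫ x, (inner ℝ (f x) u : ℝ) • f x ∂π = H u := by
    intro u
    have hg_int : Integrable (fun x => (inner ℝ (f x) u : ℝ) • f x) π := by
      refine (integrable_const (Real.sqrt (max M 0) * ‖u‖ * Real.sqrt (max M 0))).mono'
        (hg_aesm u) ?_
      refine Filter.Eventually.of_forall fun x => ?_
      rw [norm_smul]
      calc ‖(inner ℝ (f x) u : ℝ)‖ * ‖f x‖
          ≤ (‖f x‖ * ‖u‖) * ‖f x‖ :=
            mul_le_mul_of_nonneg_right (norm_inner_le_norm _ _) (norm_nonneg _)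
        _ = ‖u‖ * (‖f x‖ * ‖f x‖) := by ring
        _ ≤ ‖u‖ * (Real.sqrt (max M 0) * Real.sqrt (max M 0)) :=
            mul_le_mul_of_nonneg_left
              (mul_self_le_mul_self (norm_nonneg _) (hMnn x)) (norm_nonneg _)
        _ = Real.sqrt (max M 0) * ‖u‖ * Real.sqrt (max M 0) := by ring
    refine ext_inner_right ℝ fun v => ?_
    have hlhs : (inner ℝ (∫ x, (inner ℝ (f x) u : ℝ) • f x ∂π) v : ℝ)
        = ∫ x, (inner ℝ (f x) u : ℝ) * (inner ℝ (f x) v : ℝ) ∂π := by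
      calc (inner ℝ (∫ x, (inner ℝ (f x) u : ℝ) • f x ∂π) v : ℝ)
          = (inner ℝ v (∫ x, (inner ℝ (f x) u : ℝ) • f x ∂π) : ℝ) := real_inner_comm _ _
        _ = ∫ x, (inner ℝ v ((inner ℝ (f x) u : ℝ) • f x) : ℝ) ∂π := (integral_inner hg_int v).symm
        _ = ∫ x, (inner ℝ (f x) u : ℝ) * (inner ℝ (f x) v : ℝ) ∂π := by
            refine integral_congr_ae (Filter.Eventually.of_forall fun x => ?_)
            simp only [real_inner_smul_right]
            rw [real_inner_comm v (f x)]
    rw [hlhs]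
    -- the scalar computation via dominated convergence over pairs
    have hmain : HasSum (fun p : I × I =>
        ∫ x, (Real.sqrt (lam p.1) * φ p.1 x * (inner ℝ ((hmem p.1).toLp (φ p.1)) u : ℝ))
          * (Real.sqrt (lam p.2) * φ p.2 x * (inner ℝ ((hmem p.2).toLp (φ p.2)) v : ℝ)) ∂π)
        (∫ x, (inner ℝ (f x) u : ℝ) * (inner ℝ (f x) v : ℝ) ∂π) := by
      exact hasSum_integral_mul_of_bounds
        (a := fun (n : I) x => Real.sqrt (lam n) * φ n x * (inner ℝ ((hmem n).toLp (φ n)) u : ℝ))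
        (b := fun (n : I) x => Real.sqrt (lam n) * φ n x * (inner ℝ ((hmem n).toLp (φ n)) v : ℝ))
        (A := fun x => (inner ℝ (f x) u : ℝ)) (B := fun x => (inner ℝ (f x) v : ℝ))
        (fun n => ((hmem n).aestronglyMeasurable.const_mul _).mul_const _)
        (fun n => ((hmem n).aestronglyMeasurable.const_mul _).mul_const _)
        (fun x => hinner_fu u x) (fun x => hinner_fu v x)
        (pack u).1 (pack v).1 (pack u).2 (pack v).2
    -- compute each pair integral
    have hint_pair : ∀ p : I × I,
        (∫ x, (Real.sqrt (lam p.1) * φ p.1 x * (inner ℝ ((hmem p.1).toLp (φ p.1)) u : ℝ))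
          * (Real.sqrt (lam p.2) * φ p.2 x * (inner ℝ ((hmem p.2).toLp (φ p.2)) v : ℝ)) ∂π)
        = if p.1 = p.2 then
            lam p.1 * (inner ℝ ((hmem p.1).toLp (φ p.1)) u : ℝ)
              * (inner ℝ ((hmem p.1).toLp (φ p.1)) v : ℝ)
          else 0 := by
      rintro ⟨n, m⟩
      have h1 : (fun x =>
          (Real.sqrt (lam n) * φ n x * (inner ℝ ((hmem n).toLp (φ n)) u : ℝ))
            * (Real.sqrt (lam m) * φ m x * (inner ℝ ((hmem m).toLp (φ m)) v : ℝ)))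
          = fun x => (Real.sqrt (lam n) * (inner ℝ ((hmem n).toLp (φ n)) u : ℝ)
              * (Real.sqrt (lam m) * (inner ℝ ((hmem m).toLp (φ m)) v : ℝ)))
              * (φ n x * φ m x) := by
        funext x; ring
      rw [h1, integral_const_mul, hφint n m]
      by_cases hnm : n = m
      · subst hnm
        simp only [eq_self_iff_true, if_true, mul_one]
        have hs2 : Real.sqrt (lam n) * Real.sqrt (lam n) = lam n :=
          Real.mul_self_sqrt (hlam n)
        linear_combination ((inner ℝ ((hmem n).toLp (φ n)) u : ℝ)
          * (inner ℝ ((hmem n).toLp (φ n)) v : ℝ)) * hs2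
      · simp [hnm]
    -- extract the diagonal
    have hdiag : HasSum (fun n : I =>
        lam n * (inner ℝ ((hmem n).toLp (φ n)) u : ℝ) * (inner ℝ ((hmem n).toLp (φ n)) v : ℝ))
        (∫ x, (inner ℝ (f x) u : ℝ) * (inner ℝ (f x) v : ℝ) ∂π) := by
      have h1 : HasSum (fun p : I × I => if p.1 = p.2 then
            lam p.1 * (inner ℝ ((hmem p.1).toLp (φ p.1)) u : ℝ)
              * (inner ℝ ((hmem p.1).toLp (φ p.1)) v : ℝ)
          else 0)
          (∫ x, (inner ℝ (f x) u : ℝ) * (inner ℝ (f x) v : ℝ) ∂π) :=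
        hmain.congr_fun fun p => (hint_pair p).symm
      have hinj : Function.Injective (fun n : I => ((n, n) : I × I)) := fun a b hab =>
        congrArg Prod.fst hab
      have h2 := (Function.Injective.hasSum_iff hinj ?_).mpr h1
      · exact h2.congr_fun fun n => by simp
      · rintro ⟨a, b⟩ hp
        have hab : a ≠ b := fun hab => hp (hab ▸ ⟨a, rfl⟩)
        simp [hab]
    -- identify with ⟪H u, v⟫
    have hHuv : HasSum (fun n : I =>
        lam n * (inner ℝ ((hmem n).toLp (φ n)) u : ℝ) * (inner ℝ ((hmem n).toLp (φ n)) v : ℝ))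
        (inner ℝ (H u) v : ℝ) := by
      have h1 := (hH u).mapL (innerSL ℝ v)
      simp only [innerSL_apply_apply, real_inner_smul_right] at h1
      rw [real_inner_comm]
      refine h1.congr_fun fun n => ?_
      rw [real_inner_comm ((hmem n).toLp (φ n)) v]
    exact hdiag.unique hHuv
  -- operator-level conclusion
  have hfX_aesm : AEStronglyMeasurable (fun ω => f (X ω)) ℙ := by
    have h1 : AEStronglyMeasurable f (Measure.map X ℙ) := by rw [hlaw]; exact haesm_f
    exact h1.comp_measurable hX
  have hcontT : Continuous (fun w : Lp ℝ 2 π => (innerSL ℝ w).smulRight w) :=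
    (((ContinuousLinearMap.smulRightL ℝ (Lp ℝ 2 π) (Lp ℝ 2 π)).continuous.comp
      (innerSL ℝ).continuous).clm_apply continuous_id)
  have hT_int : Integrable (fun ω => (innerSL ℝ (f (X ω))).smulRight (f (X ω))) ℙ := by
    refine (integrable_const (Real.sqrt (max M 0) * Real.sqrt (max M 0))).mono'
      (hcontT.comp_aestronglyMeasurable hfX_aesm) ?_
    refine Filter.Eventually.of_forall fun ω => ?_
    rw [ContinuousLinearMap.norm_smulRight_apply, innerSL_apply_norm]
    exact mul_le_mul (hMnn _) (hMnn _) (norm_nonneg _) (Real.sqrt_nonneg _)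
  refine ContinuousLinearMap.ext fun u => ?_
  rw [ContinuousLinearMap.integral_apply hT_int]
  have hcongr : (fun ω => ((innerSL ℝ (f (X ω))).smulRight (f (X ω))) u)
      = fun ω => (inner ℝ (f (X ω)) u : ℝ) • f (X ω) := by
    funext ω; simp [ContinuousLinearMap.smulRight_apply]
  rw [hcongr]
  have hmap : (∫ x, (inner ℝ (f x) u : ℝ) • f x ∂(Measure.map X ℙ))
      = ∫ ω, (inner ℝ (f (X ω)) u : ℝ) • f (X ω) ∂ℙ :=
    integral_map hX.aemeasurable (by rw [hlaw]; exact hg_aesm u)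
  rw [hlaw] at hmap
  rw [← hmap, hkey u]
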